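/- With δ(A) = p·trdeg(A) − |A∩N| on finite subsets of an algebraically closed field K (p ≥ 2, N ⊆ K): if B ≤ A is a minimal self-sufficient extension of finite colored sets and A contains a point a ∉ B with a ∉ N (a 'white' point), then A = B ∪ {a}, and δ(A/B) = 0 if a is algebraic over the field generated by B, while δ(A/B) = p if a is transcendental over B. -/

import Mathlib

open scoped Classical

noncomputable def ftrdeg (K : Type*) [Field K] (A : Finset K) : ℕ :=
  sSup {n | ∃ s ⊆ A, s.card = n ∧
    AlgebraicIndependent (⊥ : Subfield K) (fun x : {y : K // y ∈ s} => (x : K))}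

noncomputable def deltaF (K : Type*) [Field K] (p : ℕ) (N : Set K) (A : Finset K) : ℤ :=
  (p : ℤ) * ftrdeg K A - (A.filter (· ∈ N)).card

section Aux

variable {K : Type*} [Field K]

/-- Algebraic independence of a finset, matching the predicate used in `ftrdeg`. -/
def AIF (s : Finset K) : Prop :=
  AlgebraicIndependent (⊥ : Subfield K) (fun x : {y : K // y ∈ s} => (x : K))

lemma AIF_iff_set (s : Finset K) :
    AIF s ↔ AlgebraicIndependent (⊥ : Subfield K) (fun x : (s : Set K) => x.1) :=
  Iff.rfl

lemma AIS_congr {s t : Set K} (h : s = t) :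
    AlgebraicIndependent (⊥ : Subfield K) (fun x : s => x.1) ↔
      AlgebraicIndependent (⊥ : Subfield K) (fun x : t => x.1) := by
  subst h; rfl

lemma AIF_empty : AIF (∅ : Finset K) := by
  haveI : IsEmpty {y : K // y ∈ (∅ : Finset K)} :=
    ⟨fun x => absurd x.2 (Finset.notMem_empty _)⟩
  exact algebraicIndependent_empty_type

lemma AIF_mono {s t : Finset K} (h : s ⊆ t) (ht : AIF t) : AIF s := by
  rw [AIF_iff_set] at ht ⊢
  exact ht.mono (Finset.coe_subset.mpr h)

lemma mem_ftrdeg_set {A s : Finset K} (hs : s ⊆ A) (h : AIF s) :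
    s.card ∈ {n | ∃ s ⊆ A, s.card = n ∧
      AlgebraicIndependent (⊥ : Subfield K) (fun x : {y : K // y ∈ s} => (x : K))} :=
  ⟨s, hs, rfl, h⟩

lemma ftrdeg_bddAbove (A : Finset K) :
    BddAbove {n | ∃ s ⊆ A, s.card = n ∧
      AlgebraicIndependent (⊥ : Subfield K) (fun x : {y : K // y ∈ s} => (x : K))} := by
  refine ⟨A.card, ?_⟩
  rintro n ⟨s, hs, rfl, -⟩
  exact Finset.card_le_card hs

lemma exists_ftrdeg_witness (A : Finset K) :
    ∃ s, s ⊆ A ∧ s.card = ftrdeg K A ∧ AIF s := by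
  have h := Nat.sSup_mem (s := {n | ∃ s ⊆ A, s.card = n ∧
      AlgebraicIndependent (⊥ : Subfield K) (fun x : {y : K // y ∈ s} => (x : K))})
    ⟨0, ∅, Finset.empty_subset A, Finset.card_empty, AIF_empty⟩ (ftrdeg_bddAbove A)
  obtain ⟨s, hs, hc, hAI⟩ := h
  exact ⟨s, hs, hc, hAI⟩

lemma le_ftrdeg {A s : Finset K} (hs : s ⊆ A) (h : AIF s) :
    s.card ≤ ftrdeg K A :=
  le_csSup (ftrdeg_bddAbove A) (mem_ftrdeg_set hs h)

lemma ftrdeg_mono {A B : Finset K} (h : A ⊆ B) : ftrdeg K A ≤ ftrdeg K B := by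
  obtain ⟨s, hsA, hcard, hAI⟩ := exists_ftrdeg_witness (K := K) A
  calc ftrdeg K A = s.card := hcard.symm
    _ ≤ ftrdeg K B := le_ftrdeg (hsA.trans h) hAI

/-- Insertion criterion for algebraic independence of finsets. -/
lemma AIF_insert_iff {s : Finset K} {a : K} (hs : AIF s) (ha : a ∉ s) :
    AIF (insert a s) ↔
      Transcendental (Algebra.adjoin (⊥ : Subfield K) (s : Set K)) a := by
  have ha' : a ∉ (s : Set K) := by simpa using ha
  have hs' : AlgebraicIndependent (⊥ : Subfield K) (fun x : (s : Set K) => x.1) := hs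
  have key := hs'.option_iff_transcendental a
  rw [Subtype.range_val] at key
  rw [← key]
  have hcomp : (fun x : (insert a (s : Set K) : Set K) => x.1) ∘
      (Set.subtypeInsertEquivOption ha').symm
      = fun o : Option ((s : Set K)) => o.elim a (fun x => (x : K)) := by
    funext o
    cases o with
    | none => simp [Set.subtypeInsertEquivOption]
    | some x => simp [Set.subtypeInsertEquivOption]
  have h2 := algebraicIndependent_equiv' (R := (⊥ : Subfield K))
    (Set.subtypeInsertEquivOption ha').symm hcomp
  rw [h2]
  rw [AIF_iff_set, AIS_congr (Finset.coe_insert a s)]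

/-- Inclusion ring hom between subobjects of `K`. -/
def subRingHom {S₁ S₂ : Type*} [SetLike S₁ K] [SubringClass S₁ K]
    [SetLike S₂ K] [SubringClass S₂ K]
    (A : S₁) (B : S₂) (h : ∀ y : K, y ∈ A → y ∈ B) : ↥A →+* ↥B where
  toFun r := ⟨r.1, h r.1 r.2⟩
  map_one' := rfl
  map_mul' _ _ := rfl
  map_zero' := rfl
  map_add' _ _ := rfl

/-- Transfer algebraicity along a compatible ring hom. -/
lemma isAlgebraic_transfer {R₁ R₂ : Type*} [CommRing R₁] [CommRing R₂]
    [Algebra R₁ K] [Algebra R₂ K] (f : R₁ →+* R₂)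
    (hf : ∀ r, algebraMap R₂ K (f r) = algebraMap R₁ K r)
    (hinj : Function.Injective (algebraMap R₁ K))
    {x : K} (h : IsAlgebraic R₁ x) : IsAlgebraic R₂ x := by
  obtain ⟨q, hq, hev⟩ := h
  have hfinj : Function.Injective f := by
    intro u v huv
    apply hinj
    rw [← hf, ← hf, huv]
  refine ⟨q.map f, ?_, ?_⟩
  · exact (Polynomial.map_ne_zero_iff hfinj).mpr hq
  · rw [Polynomial.aeval_def, Polynomial.eval₂_map]
    have hc : (algebraMap R₂ K).comp f = algebraMap R₁ K := RingHom.ext hf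
    rw [hc]
    exact hev

set_option maxHeartbeats 1000000 in
set_option synthInstance.maxHeartbeats 200000 in
/-- Clearing denominators: algebraic over the intermediate field generated by `S`
implies algebraic over the ring generated by `S`. -/
lemma isAlgebraic_adjoinField_to_ring (S : Set K) {x : K}
    (h : IsAlgebraic (IntermediateField.adjoin (⊥ : Subfield K) S) x) :
    IsAlgebraic (Algebra.adjoin (⊥ : Subfield K) S) x := by
  set R := Algebra.adjoin (⊥ : Subfield K) S with hRdef
  set F := IntermediateField.adjoin (⊥ : Subfield K) S with hFdef
  have hle : ∀ y : K, y ∈ R → y ∈ F := fun y hy =>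
    IntermediateField.algebra_adjoin_le_adjoin _ _ hy
  letI : Algebra ↥R ↥F := (subRingHom R F hle).toAlgebra
  haveI : IsScalarTower ↥R ↥F K := IsScalarTower.of_algebraMap_eq fun r => rfl
  haveI : IsDomain ↥R := by
    refine Function.Injective.isDomain (R.val : ↥R →ₐ[(⊥ : Subfield K)] K).toRingHom ?_
    exact Subtype.val_injective
  have hkey : Algebra.adjoin (⊥ : Subfield K) S
      = (MvPolynomial.aeval (Subtype.val : S → K)).range := by
    have := Algebra.adjoin_range_eq_range_aeval (⊥ : Subfield K) (Subtype.val : S → K)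
    rwa [Subtype.range_val] at this
  haveI : IsFractionRing ↥R ↥F := by
    refine ⟨?_, ?_, ?_⟩
    · rintro ⟨y, hy⟩
      rw [isUnit_iff_ne_zero]
      intro h0
      have hy0 : (y : K) = 0 := congrArg Subtype.val h0
      exact nonZeroDivisors.coe_ne_zero ⟨y, hy⟩ (Subtype.ext hy0)
    · intro z
      obtain ⟨r, s, hz⟩ := (IntermediateField.mem_adjoin_iff _ (z : K)).mp z.2
      set pr := MvPolynomial.aeval (Subtype.val : S → K) r with hpr
      set ps := MvPolynomial.aeval (Subtype.val : S → K) s with hps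
      have hprR : pr ∈ R := by rw [hRdef, hkey]; exact ⟨r, rfl⟩
      have hpsR : ps ∈ R := by rw [hRdef, hkey]; exact ⟨s, rfl⟩
      by_cases h0 : ps = 0
      · have hz0 : z = 0 := by
          apply Subtype.ext
          rw [hz, h0, div_zero]
          rfl
        refine ⟨⟨0, 1⟩, ?_⟩
        rw [hz0]
        simp
      · refine ⟨⟨⟨pr, hprR⟩, ⟨⟨ps, hpsR⟩,
          mem_nonZeroDivisors_of_ne_zero (fun hc => h0 (congrArg Subtype.val hc))⟩⟩, ?_⟩
        apply Subtype.ext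
        show (z : K) * ps = pr
        rw [hz]
        exact div_mul_cancel₀ _ h0
    · intro u v huv
      refine ⟨1, ?_⟩
      have huv2 := congrArg (Subtype.val : ↥F → K) huv
      have huv' : (u : K) = (v : K) := huv2
      rw [Subtype.ext huv']
  exact (IsFractionRing.isAlgebraic_iff ↥R ↥F K).mpr h

/-- A subfield of `K`, viewed as a subalgebra over the prime subfield. -/
def sfA (F : Subfield K) : Subalgebra (⊥ : Subfield K) K where
  carrier := F
  mul_mem' := fun ha hb => mul_mem ha hb
  one_mem' := one_mem F
  add_mem' := fun ha hb => add_mem ha hb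
  zero_mem' := zero_mem F
  algebraMap_mem' := fun r => (bot_le : (⊥ : Subfield K) ≤ F) r.2

lemma adjoin_subset_subfield (S : Set K) (F : Subfield K) (h : S ⊆ F) :
    ∀ y : K, y ∈ Algebra.adjoin (⊥ : Subfield K) S → y ∈ F := by
  intro y hy
  exact (Algebra.adjoin_le (show S ⊆ (sfA F : Set K) from h)) hy

set_option maxHeartbeats 1000000 in
set_option synthInstance.maxHeartbeats 200000 in
/-- Key transitivity argument: if every element of `B` is algebraic over the ring
generated by `t'` and `a` is algebraic over the field generated by `B`, then `a` is
algebraic over the ring generated by `t'`. -/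
lemma key_alg (B t' : Finset K) (a : K)
    (halgB : ∀ b ∈ B, IsAlgebraic (Algebra.adjoin (⊥ : Subfield K) (t' : Set K)) b)
    (haCB : IsAlgebraic (Subfield.closure (B : Set K)) a) :
    IsAlgebraic (Algebra.adjoin (⊥ : Subfield K) (t' : Set K)) a := by
  set F0 := IntermediateField.adjoin (⊥ : Subfield K) (t' : Set K) with hF0
  have halgB' : ∀ b ∈ B, IsAlgebraic ↥F0 b := by
    intro b hb
    refine isAlgebraic_transfer (K := K)
      (subRingHom (Algebra.adjoin (⊥ : Subfield K) (t' : Set K)) F0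
        (fun y hy => IntermediateField.algebra_adjoin_le_adjoin _ _ hy))
      (fun r => rfl) Subtype.val_injective (halgB b hb)
  set E := IntermediateField.adjoin ↥F0 (B : Set K) with hE
  haveI hEalg : Algebra.IsAlgebraic ↥F0 ↥E := by
    refine IntermediateField.isAlgebraic_adjoin ?_
    intro b hb
    exact isAlgebraic_iff_isIntegral.mp (halgB' b hb)
  haveI : Algebra.IsIntegral ↥F0 ↥E := Algebra.isAlgebraic_iff_isIntegral.mp hEalg
  have hCBE : ∀ y : K, y ∈ Subfield.closure (B : Set K) → y ∈ E := by
    intro y hy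
    have hsub : Subfield.closure (B : Set K) ≤ E.toSubfield := by
      apply Subfield.closure_le.mpr
      intro b hb
      exact IntermediateField.subset_adjoin _ _ hb
    exact hsub hy
  have haE : IsAlgebraic ↥E a :=
    isAlgebraic_transfer (K := K) (subRingHom (Subfield.closure (B : Set K)) E hCBE)
      (fun r => rfl) Subtype.val_injective haCB
  have haInt : IsIntegral ↥F0 a := isIntegral_trans a (isAlgebraic_iff_isIntegral.mp haE)
  exact isAlgebraic_adjoinField_to_ring _ (isAlgebraic_iff_isIntegral.mpr haInt)

end Aux

set_option maxHeartbeats 1000000 in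
/-- if `B ≤ A` is a minimal self-sufficient extension of finite colored
sets containing a white point `a ∉ B`, then `A = B ∪ {a}`, and `δ(A/B) = 0` if `a` is
algebraic over the field generated by `B`, while `δ(A/B) = p` if `a` is transcendental. -/
theorem minimal_extension_white (K : Type*) [Field K] [IsAlgClosed K]
    (p : ℕ) (hp : 2 ≤ p) (N : Set K)
    (B A : Finset K) (hBA : B ⊂ A)
    (hss : ∀ C : Finset K, C ⊆ A → deltaF K p N (C ∩ B) ≤ deltaF K p N C)
    (hmin : ∀ Y' : Finset K, B ⊂ Y' → Y' ⊂ A →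
      deltaF K p N A - deltaF K p N Y' < 0)
    (a : K) (haA : a ∈ A) (haB : a ∉ B) (haN : a ∉ N) :
    A = B ∪ {a} ∧
    (IsAlgebraic (Subfield.closure (B : Set K)) a →
      deltaF K p N A - deltaF K p N B = 0) ∧
    (Transcendental (Subfield.closure (B : Set K)) a →
      deltaF K p N A - deltaF K p N B = p) := by
  have hBsubA : B ⊆ A := hBA.subset
  -- Step 1 : A = B ∪ {a}
  have hstep1 : A = B ∪ {a} := by
    refine Finset.Subset.antisymm ?_ ?_
    · by_contra hns
      obtain ⟨c, hcA, hc⟩ := Finset.not_subset.mp hns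
      have hca : c ≠ a := fun h => hc (by simp [h])
      have hcB : c ∉ B := fun h => hc (by simp [h])
      set Y' := A.erase a with hY'
      have hBsubY' : B ⊆ Y' := fun x hx =>
        Finset.mem_erase.mpr ⟨fun h => haB (h ▸ hx), hBsubA hx⟩
      have hBY' : B ⊂ Y' :=
        (Finset.ssubset_iff_of_subset hBsubY').mpr
          ⟨c, Finset.mem_erase.mpr ⟨hca, hcA⟩, hcB⟩
      have hY'A : Y' ⊂ A := Finset.erase_ssubset haA
      have hlt := hmin Y' hBY' hY'A
      have hfil : Y'.filter (· ∈ N) = A.filter (· ∈ N) := by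
        rw [hY', Finset.filter_erase]
        exact Finset.erase_eq_of_notMem (by simp [haN])
      have htr : (ftrdeg K Y' : ℤ) ≤ (ftrdeg K A : ℤ) := by
        exact_mod_cast ftrdeg_mono (Finset.erase_subset a A)
      unfold deltaF at hlt
      rw [hfil] at hlt
      have hp0 : (0 : ℤ) ≤ (p : ℤ) := by positivity
      nlinarith
    · apply Finset.union_subset hBsubA
      simpa using haA
  -- filters of A and B agree
  have hfilAB : A.filter (· ∈ N) = B.filter (· ∈ N) := by
    rw [hstep1, Finset.filter_union, Finset.filter_singleton, if_neg haN,
      Finset.union_empty]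
  have hdelta : deltaF K p N A - deltaF K p N B
      = (p : ℤ) * ((ftrdeg K A : ℤ) - (ftrdeg K B : ℤ)) := by
    unfold deltaF
    rw [hfilAB]
    ring
  obtain ⟨t, htB, htcard, htAI⟩ := exists_ftrdeg_witness (K := K) B
  have hge : ftrdeg K B ≤ ftrdeg K A :=
    ftrdeg_mono (by rw [hstep1]; exact Finset.subset_union_left)
  refine ⟨hstep1, ?_, ?_⟩
  · -- algebraic case
    intro halg
    have hle : ftrdeg K A ≤ ftrdeg K B := by
      obtain ⟨s, hsA, hscard, hsAI⟩ := exists_ftrdeg_witness (K := K) A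
      by_cases has : a ∈ s
      · set t' := s.erase a with ht'def
        have ht'B : t' ⊆ B := by
          intro x hx
          have hxs := Finset.mem_of_mem_erase hx
          have hxa := Finset.ne_of_mem_erase hx
          have hxA := hsA hxs
          rw [hstep1] at hxA
          simp only [Finset.mem_union, Finset.mem_singleton] at hxA
          tauto
        have hins : insert a t' = s := Finset.insert_erase has
        have ht'AI : AIF t' := AIF_mono (Finset.erase_subset a s) hsAI
        have hat' : a ∉ t' := Finset.notMem_erase a s
        have htrans : Transcendental (Algebra.adjoin (⊥ : Subfield K) (t' : Set K)) a :=
          (AIF_insert_iff ht'AI hat').mp (by rw [hins]; exact hsAI)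
        by_cases hex : ∃ b ∈ B, b ∉ t' ∧ AIF (insert b t')
        · obtain ⟨b, hbB, hbt', hbAI⟩ := hex
          have hlef : (insert b t').card ≤ ftrdeg K B :=
            le_ftrdeg (Finset.insert_subset hbB ht'B) hbAI
          rw [Finset.card_insert_of_notMem hbt'] at hlef
          have hcardt' : t'.card = s.card - 1 := by
            rw [ht'def]; exact Finset.card_erase_of_mem has
          have hspos : 1 ≤ s.card := Finset.card_pos.mpr ⟨a, has⟩
          omega
        · exfalso
          push_neg at hex
          have halgB : ∀ b ∈ B, IsAlgebraic
              (Algebra.adjoin (⊥ : Subfield K) (t' : Set K)) b := by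
            intro b hbB
            by_cases hbt' : b ∈ t'
            · have hbmem : b ∈ Algebra.adjoin (⊥ : Subfield K) (t' : Set K) :=
                Algebra.subset_adjoin (by simpa using hbt')
              have hh := isAlgebraic_algebraMap (R := ↥(Algebra.adjoin (⊥ : Subfield K)
                (t' : Set K))) (A := K) ⟨b, hbmem⟩
              exact hh
            · by_contra hT
              exact hex b hbB hbt' ((AIF_insert_iff ht'AI hbt').mpr hT)
          exact htrans (key_alg B t' a halgB halg)
      · have hsB : s ⊆ B := by
          intro x hx
          have hxA := hsA hx
          rw [hstep1] at hxA
          simp only [Finset.mem_union, Finset.mem_singleton] at hxA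
          rcases hxA with h | h
          · exact h
          · exact absurd (h ▸ hx) has
        calc ftrdeg K A = s.card := hscard.symm
          _ ≤ ftrdeg K B := le_ftrdeg hsB hsAI
    rw [hdelta]
    have heq : ftrdeg K A = ftrdeg K B := le_antisymm hle hge
    rw [heq]
    ring
  · -- transcendental case
    intro htrans
    have h1 : ftrdeg K A ≤ ftrdeg K B + 1 := by
      obtain ⟨s, hsA, hscard, hsAI⟩ := exists_ftrdeg_witness (K := K) A
      have hsB : s.erase a ⊆ B := by
        intro x hx
        have hxs := Finset.mem_of_mem_erase hx
        have hxa := Finset.ne_of_mem_erase hx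
        have hxA := hsA hxs
        rw [hstep1] at hxA
        simp only [Finset.mem_union, Finset.mem_singleton] at hxA
        tauto
      have h2 : (s.erase a).card ≤ ftrdeg K B :=
        le_ftrdeg hsB (AIF_mono (Finset.erase_subset _ _) hsAI)
      by_cases has : a ∈ s
      · have := Finset.card_erase_of_mem has
        omega
      · have := Finset.erase_eq_of_notMem has
        rw [this] at h2
        omega
    have h2 : ftrdeg K B + 1 ≤ ftrdeg K A := by
      have haT : a ∉ t := fun h => haB (htB h)
      have htrans' : Transcendental (Algebra.adjoin (⊥ : Subfield K) (t : Set K)) a := by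
        intro halg'
        apply htrans
        refine isAlgebraic_transfer (K := K)
          (subRingHom (Algebra.adjoin (⊥ : Subfield K) (t : Set K))
            (Subfield.closure (B : Set K)) ?_)
          (fun r => rfl) Subtype.val_injective halg'
        refine adjoin_subset_subfield _ _ ?_
        intro y hy
        refine Subfield.subset_closure ?_
        have : y ∈ t := by exact_mod_cast hy
        exact_mod_cast htB this
      have hAIins : AIF (insert a t) := (AIF_insert_iff htAI haT).mpr htrans'
      have hsub : insert a t ⊆ A := by
        rw [hstep1]
        intro x hx
        rcases Finset.mem_insert.mp hx with h | h
        · simp [h]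
        · exact Finset.mem_union_left _ (htB h)
      have hlef := le_ftrdeg hsub hAIins
      rw [Finset.card_insert_of_notMem haT, htcard] at hlef
      omega
    rw [hdelta]
    have heq : ftrdeg K A = ftrdeg K B + 1 := le_antisymm h1 h2
    rw [heq]
    push_cast
    ring
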